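/- Anti-concentration of the symmetric binomial: there exist universal constants c₁, c₂ > 0 such that for X ∼ Bin(n, 1/2) and any t ∈ [0, 1/8], P(X ≥ n/2 + nt) ≥ c₁·e^{−c₂·t²·n}. -/

import Mathlib

open Finset


lemma aux_central (k : ℕ) (hk : 1 ≤ k) : (4:ℝ)^k ≤ 2 * Real.sqrt k * Nat.centralBinom k := by
  induction k, hk using Nat.le_induction with
  | base =>
    simp [Nat.centralBinom]
    norm_num [Nat.choose]
  | succ k hk ih =>
    have ih' := ih
    have hid : ((k:ℝ) + 1) * Nat.centralBinom (k+1) = 2 * (2*k+1) * Nat.centralBinom k := by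
      exact_mod_cast Nat.succ_mul_centralBinom_succ k
    have ha2 : (Real.sqrt k)^2 = k := Real.sq_sqrt (by positivity)
    have hb2 : (Real.sqrt ((k:ℝ)+1))^2 = (k:ℝ)+1 := Real.sq_sqrt (by positivity)
    set a := Real.sqrt k with ha
    set b := Real.sqrt ((k:ℝ)+1) with hb
    have ha1 : 1 ≤ a := by
      rw [ha, show (1:ℝ) = Real.sqrt 1 by simp]
      exact Real.sqrt_le_sqrt (by exact_mod_cast hk)
    have hb0 : 0 < b := Real.sqrt_pos.mpr (by positivity)
    have hu2 : (2*((k:ℝ)+1)*a)^2 = 4*((k:ℝ)+1)^2*k := by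
      rw [mul_pow, mul_pow, ha2]; ring
    have hv2 : ((2*(k:ℝ)+1)*b)^2 = (2*(k:ℝ)+1)^2*((k:ℝ)+1) := by
      rw [mul_pow, hb2]
    have h1 : (2*((k:ℝ)+1)*a)^2 + ((k:ℝ)+1) = ((2*(k:ℝ)+1)*b)^2 := by
      rw [hu2, hv2]; ring
    have hsum : (0:ℝ) < 2*((k:ℝ)+1)*a + (2*(k:ℝ)+1)*b := by positivity
    have key : 2 * ((k:ℝ)+1) * a ≤ (2*(k:ℝ)+1) * b := by nlinarith [h1, hsum]
    have hcb : (0:ℝ) < Nat.centralBinom k := by exact_mod_cast Nat.centralBinom_pos k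
    have hk1 : (0:ℝ) < (k:ℝ) + 1 := by positivity
    have hC1 : (Nat.centralBinom (k+1) : ℝ) = 2 * (2*(k:ℝ)+1) * Nat.centralBinom k / ((k:ℝ)+1) := by
      field_simp
      linarith [hid]
    have goal' : (4:ℝ)^(k+1) ≤ 2 * b * ((Nat.centralBinom (k+1):ℝ)) := by
      rw [hC1, pow_succ, ← mul_div_assoc, le_div_iff₀ hk1]
      nlinarith [mul_le_mul_of_nonneg_left ih' (by positivity : (0:ℝ) ≤ 4*((k:ℝ)+1)),
        mul_le_mul_of_nonneg_right key (by positivity : (0:ℝ) ≤ 4*(Nat.centralBinom k:ℝ))]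
    have : Real.sqrt ((k:ℕ)+1:ℕ) = b := by rw [hb]; norm_num
    push_cast
    calc (4:ℝ)^(k+1) ≤ 2 * b * ((Nat.centralBinom (k+1):ℝ)) := goal'
      _ = 2 * Real.sqrt ((k:ℝ)+1) * ((Nat.centralBinom (k+1):ℝ)) := by rw [hb]



lemma aux_mid (n : ℕ) (hn : 2 ≤ n) :
    1 / (4 * Real.sqrt n) ≤ (n.choose (n/2) : ℝ) * (1/2)^n := by
  have hs : (0:ℝ) < Real.sqrt n := Real.sqrt_pos.mpr (by exact_mod_cast Nat.lt_of_lt_of_le Nat.zero_lt_two hn)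
  rcases Nat.even_or_odd n with ⟨k, hk⟩ | ⟨k, hk⟩
  · have hk1 : 1 ≤ k := by omega
    have h := aux_central k hk1
    have hsk : (0:ℝ) < Real.sqrt k := Real.sqrt_pos.mpr (by exact_mod_cast Nat.lt_of_lt_of_le Nat.zero_lt_one hk1)
    have hch : n / 2 = k := by omega
    have hcb : (Nat.centralBinom k : ℝ) ≤ (n.choose (n/2) : ℝ) := by
      rw [hch, Nat.centralBinom_eq_two_mul_choose]
      exact_mod_cast Nat.choose_le_choose k (by omega)
    have hpow : ((1:ℝ)/2)^n = 1/4^k := by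
      rw [show n = 2*k by omega, pow_mul]
      rw [show ((1:ℝ)/2)^2 = 1/4 by norm_num, div_pow, one_pow]
    have h4 : (0:ℝ) < (4:ℝ)^k := by positivity
    have hss : Real.sqrt k ≤ Real.sqrt n := Real.sqrt_le_sqrt (by exact_mod_cast by omega)
    have hCpos : (0:ℝ) ≤ (n.choose (n/2) : ℝ) := by positivity
    rw [hpow, mul_one_div, div_le_div_iff₀ (by positivity) h4]
    nlinarith [mul_le_mul_of_nonneg_right hss (by exact_mod_cast Nat.zero_le _ : (0:ℝ) ≤ (Nat.centralBinom k : ℝ))]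
  · have hk1 : 1 ≤ k := by omega
    have h := aux_central k hk1
    have hsk : (0:ℝ) < Real.sqrt k := Real.sqrt_pos.mpr (by exact_mod_cast Nat.lt_of_lt_of_le Nat.zero_lt_one hk1)
    have hch : n / 2 = k := by omega
    have hcb : (Nat.centralBinom k : ℝ) ≤ (n.choose (n/2) : ℝ) := by
      rw [hch, Nat.centralBinom_eq_two_mul_choose]
      exact_mod_cast Nat.choose_le_choose k (by omega)
    have hpow : ((1:ℝ)/2)^n = (1/2) * (1/4^k) := by
      rw [show n = 2*k+1 by omega, pow_succ, pow_mul]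
      rw [show ((1:ℝ)/2)^2 = 1/4 by norm_num, div_pow, one_pow]
      ring
    have h4 : (0:ℝ) < (4:ℝ)^k := by positivity
    have hss : Real.sqrt k ≤ Real.sqrt n := Real.sqrt_le_sqrt (by exact_mod_cast by omega)
    have hCpos : (0:ℝ) ≤ (n.choose (n/2) : ℝ) := by positivity
    rw [hpow, show (n.choose (n/2):ℝ) * ((1/2)*(1/4^k)) = ((n.choose (n/2):ℝ)/2) / 4^k by ring,
      div_le_div_iff₀ (by positivity) h4]
    nlinarith [mul_le_mul_of_nonneg_right hss (by exact_mod_cast Nat.zero_le _ : (0:ℝ) ≤ (Nat.centralBinom k : ℝ))]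

-- antitone of choose beyond the middle
lemma aux_anti (n a b : ℕ) (h2 : n ≤ 2*a) (hab : a ≤ b) : n.choose b ≤ n.choose a := by
  induction b, hab using Nat.le_induction with
  | base => exact le_refl _
  | succ b hb ih =>
    refine le_trans ?_ ih
    have key := Nat.choose_succ_right_eq n b
    have h1 : n - b ≤ b + 1 := by omega
    have := Nat.mul_le_mul_left (n.choose b) h1
    nlinarith [Nat.choose_pos (le_refl n)]

-- ratio lower bound
lemma aux_ratio (n h : ℕ) (ρ : ℝ) (hρ : 0 ≤ ρ) :
    ∀ j : ℕ, (∀ i < j, ρ * ((h:ℝ) + i + 1) ≤ (n:ℝ) - (h + i)) →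
      (n.choose h : ℝ) * ρ^j ≤ (n.choose (h+j) : ℝ) := by
  intro j
  induction j with
  | zero => intro _; simp
  | succ j ih =>
    intro hcond
    have ih' := ih (fun i hi => hcond i (by omega))
    have hcj := hcond j (by omega)
    have hle : h + j ≤ n := by
      by_contra hc
      push_neg at hc
      have : (n:ℝ) - (h + j) < 0 := by
        have : (n:ℝ) < h + j := by exact_mod_cast hc
        linarith
      nlinarith [mul_nonneg hρ (by positivity : (0:ℝ) ≤ (h:ℝ) + j + 1)]
    have key : (n.choose (h+j+1) : ℝ) * ((h:ℝ)+j+1) = (n.choose (h+j) : ℝ) * ((n:ℝ) - (h+j)) := by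
      have hc := Nat.choose_succ_right_eq n (h+j)
      zify [hle] at hc
      exact_mod_cast hc
    have hstep : (n.choose (h+j) : ℝ) * ρ ≤ (n.choose (h+j+1) : ℝ) := by
      have hpos : (0:ℝ) < (h:ℝ)+j+1 := by positivity
      rw [← mul_le_mul_iff_of_pos_right hpos] at *
      calc (n.choose (h+j) : ℝ) * ρ * ((h:ℝ)+j+1) ≤ (n.choose (h+j) : ℝ) * ((n:ℝ) - (h+j)) := by
            nlinarith [Nat.cast_nonneg (α := ℝ) (n.choose (h+j))]
        _ = (n.choose (h+j+1) : ℝ) * ((h:ℝ)+j+1) := key.symm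
    calc (n.choose h : ℝ) * ρ^(j+1) = ((n.choose h : ℝ) * ρ^j) * ρ := by ring
      _ ≤ (n.choose (h+j) : ℝ) * ρ := by
          apply mul_le_mul_of_nonneg_right ih' hρ
      _ ≤ (n.choose (h+j+1) : ℝ) := hstep
      _ = (n.choose (h+(j+1)) : ℝ) := by norm_num [Nat.add_assoc]


lemma aux_exp (x : ℝ) (hx0 : 0 ≤ x) (hx : x ≤ 3/8) : Real.exp (-(3*x)) ≤ (1-x)/(1+x) := by
  have h1x : (0:ℝ) < 1 + x := by linarith
  have hx1 : 1 + x ≤ Real.exp x := by linarith [Real.add_one_le_exp x]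
  have h3 : Real.exp (3*x) = (Real.exp x)^3 := by
    rw [show (3:ℝ)*x = ((3:ℕ):ℝ)*x by norm_num, Real.exp_nat_mul]
  have hpow : (1+x)^3 ≤ (Real.exp x)^3 := pow_le_pow_left₀ h1x.le hx1 3
  have hinner : (0:ℝ) ≤ 1 - x - x^2 := by nlinarith [mul_le_mul_of_nonneg_left hx hx0]
  have hpoly : (1+x) ≤ (1+x)^3 * (1-x) := by
    nlinarith [mul_nonneg (mul_nonneg h1x.le hx0) hinner]
  have he : 1 + x ≤ Real.exp (3*x) * (1-x) := by
    have := mul_le_mul_of_nonneg_right hpow (by linarith : (0:ℝ) ≤ 1-x)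
    rw [h3]; linarith
  have e3 : Real.exp (-(3*x)) * Real.exp (3*x) = 1 := by
    rw [← Real.exp_add]; norm_num
  have e4 : Real.exp (-(3*x)) * (Real.exp (3*x) * (1-x)) = 1-x := by
    rw [← mul_assoc, e3, one_mul]
  have key : Real.exp (-(3*x)) * (1+x) ≤ 1 - x := by
    calc Real.exp (-(3*x)) * (1+x) ≤ Real.exp (-(3*x)) * (Real.exp (3*x) * (1-x)) :=
          mul_le_mul_of_nonneg_left he (Real.exp_pos _).le
      _ = 1 - x := e4
  rw [le_div_iff₀ h1x]
  exact key











set_option maxHeartbeats 2000000 in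
theorem binomial_anti_concentration :
    ∃ c₁ : ℝ, 0 < c₁ ∧ ∃ c₂ : ℝ, 0 < c₂ ∧
      ∀ (n : ℕ) (t : ℝ), 0 ≤ t → t ≤ 1 / 8 →
        c₁ * Real.exp (-c₂ * t ^ 2 * n)
          ≤ ∑ k ∈ Finset.range (n + 1),
              if (n : ℝ) / 2 + n * t ≤ k then (n.choose k : ℝ) * (1 / 2) ^ n else 0 := by
  refine ⟨Real.exp (-400), Real.exp_pos _, 12, by norm_num, ?_⟩
  intro n t ht0 ht8
  have hnonneg : ∀ k ∈ Finset.range (n+1),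
      (0:ℝ) ≤ if (n : ℝ) / 2 + n * t ≤ k then (n.choose k : ℝ) * (1 / 2) ^ n else 0 := by
    intro k _
    split <;> positivity
  rcases lt_or_ge n 400 with hn | hn
  · -- small case
    have hmem : n ∈ Finset.range (n+1) := self_mem_range_succ n
    have hcond : (n : ℝ) / 2 + n * t ≤ n := by
      have := mul_le_mul_of_nonneg_left ht8 (Nat.cast_nonneg (α := ℝ) n)
      linarith
    have hsingle := Finset.single_le_sum hnonneg hmem
    rw [if_pos hcond, Nat.choose_self, Nat.cast_one, one_mul] at hsingle
    refine le_trans ?_ hsingle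
    have h1 : Real.exp (-12 * t^2 * n) ≤ 1 := by
      rw [Real.exp_le_one_iff]
      have := mul_nonneg (mul_nonneg (by norm_num : (0:ℝ) ≤ 12) (sq_nonneg t))
        (Nat.cast_nonneg (α := ℝ) n)
      linarith
    have h2 : Real.exp (-400:ℝ) ≤ Real.exp (-(n:ℝ)) := by
      apply Real.exp_le_exp.mpr
      have : (n:ℝ) ≤ 400 := by exact_mod_cast hn.le
      linarith
    have h3 : Real.exp (-(n:ℝ)) ≤ ((1:ℝ)/2)^n := by
      rw [show -(n:ℝ) = (n:ℕ) * (-1:ℝ) by push_cast; ring, Real.exp_nat_mul]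
      apply pow_le_pow_left₀ (Real.exp_pos _).le
      have he2 : (2:ℝ) ≤ Real.exp 1 := by linarith [Real.add_one_le_exp 1]
      rw [show (-1:ℝ) = -(1:ℝ) by norm_num, Real.exp_neg]
      rw [inv_le_comm₀ (Real.exp_pos 1) (by norm_num)] <;> try norm_num
      linarith
    calc Real.exp (-400:ℝ) * Real.exp (-12 * t^2 * n)
        ≤ Real.exp (-400:ℝ) * 1 := mul_le_mul_of_nonneg_left h1 (Real.exp_pos _).le
      _ = Real.exp (-400:ℝ) := mul_one _
      _ ≤ ((1:ℝ)/2)^n := le_trans h2 h3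
  · -- main case
    have hn400 : (400:ℝ) ≤ n := by exact_mod_cast hn
    have hn0 : (0:ℝ) < n := by linarith
    obtain ⟨h, hh_def⟩ : ∃ h, h = n / 2 := ⟨_, rfl⟩
    obtain ⟨K, hK_def⟩ : ∃ K, K = Nat.ceil ((n:ℝ)/2 + n*t) := ⟨_, rfl⟩
    obtain ⟨m, hm_def⟩ : ∃ m, m = Nat.sqrt n := ⟨_, rfl⟩
    obtain ⟨s, hs_def⟩ : ∃ s, s = Real.sqrt n := ⟨_, rfl⟩
    have hs2 : s^2 = n := by rw [hs_def]; exact Real.sq_sqrt hn0.le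
    have hs20 : 20 ≤ s := by
      rw [hs_def, show (20:ℝ) = Real.sqrt 400 by
        rw [show (400:ℝ) = 20^2 by norm_num, Real.sqrt_sq (by norm_num)]]
      exact Real.sqrt_le_sqrt hn400
    have hs0 : 0 < s := by linarith
    have hm_le : (m:ℝ) ≤ s := by
      rw [hs_def, hm_def]
      exact (Real.le_sqrt (by positivity) hn0.le).mpr (by exact_mod_cast Nat.sqrt_le' n)
    have hs_lt : s < m + 1 := by
      rw [hs_def, hm_def, Real.sqrt_lt' (by positivity)]
      exact_mod_cast Nat.lt_succ_sqrt' n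
    have hh2 : 2 * h ≤ n := by omega
    have hh2' : n ≤ 2 * h + 1 := by omega
    have hh_le : (h:ℝ) ≤ (n:ℝ)/2 := by
      have : ((2*h:ℕ):ℝ) ≤ n := by exact_mod_cast hh2
      push_cast at this; linarith
    have hh_ge : (n:ℝ)/2 - 1 ≤ (h:ℝ) := by
      have : (n:ℝ) ≤ ((2*h+1:ℕ):ℝ) := by exact_mod_cast hh2'
      push_cast at this; linarith
    have hK_ge : (n:ℝ)/2 + n*t ≤ K := by
      rw [hK_def]; exact Nat.le_ceil _
    have hK_le : (K:ℝ) ≤ (n:ℝ)/2 + n*t + 1 := by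
      rw [hK_def]
      exact (Nat.ceil_lt_add_one (by positivity)).le
    have hnt0 : (0:ℝ) ≤ (n:ℝ)*t := mul_nonneg hn0.le ht0
    have hhK : h ≤ K := by
      have : (h:ℝ) ≤ (K:ℝ) := by linarith
      exact_mod_cast this
    obtain ⟨j, hj_def'⟩ : ∃ j, j = K + m - h := ⟨_, rfl⟩
    have hj_def : h + j = K + m := by omega
    have hj_real : (j:ℝ) = (K:ℝ) + m - h := by
      have : ((h + j:ℕ):ℝ) = ((K + m:ℕ):ℝ) := by exact_mod_cast hj_def
      push_cast at this; linarith
    have hnt : n*t ≤ (n:ℝ)/8 := by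
      have := mul_le_mul_of_nonneg_left ht8 hn0.le
      linarith
    have hj_ub : (j:ℝ) ≤ n*t + s + 2 := by rw [hj_real]; linarith
    have h20 : 20*s ≤ s^2 := by
      have := mul_le_mul_of_nonneg_right hs20 hs0.le
      rw [pow_two]; linarith
    have hs216 : s + 2 ≤ s^2/16 := by linarith
    have hj316 : (j:ℝ) ≤ 3*(n:ℝ)/16 := by
      have : s + 2 ≤ (n:ℝ)/16 := by rw [← hs2]; linarith
      linarith
    have hj0 : (0:ℝ) ≤ j := Nat.cast_nonneg j
    have hhj_le : (h:ℝ) + j ≤ 11*(n:ℝ)/16 := by linarith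
    have hhjn : h + j ≤ n := by
      have : ((h+j:ℕ):ℝ) ≤ (n:ℝ) := by push_cast; linarith
      exact_mod_cast this
    have hKm_n : K + m ≤ n := by omega
    have hh1 : 1 ≤ h := by omega
    have hden : (0:ℝ) < (h:ℝ) + j := by
      have : (1:ℝ) ≤ h := by exact_mod_cast hh1
      linarith
    obtain ⟨ρ, hρ_def⟩ : ∃ ρ : ℝ, ρ = ((n:ℝ) - ((h:ℝ)+j))/((h:ℝ)+j) := ⟨_, rfl⟩
    have hnum : (0:ℝ) ≤ (n:ℝ) - ((h:ℝ)+j) := by linarith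
    have hρ0 : 0 ≤ ρ := by rw [hρ_def]; exact div_nonneg hnum hden.le
    have hcond : ∀ i < j, ρ * ((h:ℝ) + i + 1) ≤ (n:ℝ) - ((h:ℝ) + i) := by
      intro i hi
      have hij : (i:ℝ) + 1 ≤ j := by exact_mod_cast hi
      have h1 : ρ * ((h:ℝ) + i + 1) ≤ ρ * ((h:ℝ) + j) :=
        mul_le_mul_of_nonneg_left (by linarith) hρ0
      have h2 : ρ * ((h:ℝ) + j) = (n:ℝ) - ((h:ℝ)+j) := by rw [hρ_def]; exact div_mul_cancel₀ _ hden.ne'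
      linarith
    have hratio := aux_ratio n h ρ hρ0 j hcond
    -- lower bound ρ by exponential
    obtain ⟨x, hx_def⟩ : ∃ x : ℝ, x = 2*(j:ℝ)/n := ⟨_, rfl⟩
    have hx0 : 0 ≤ x := by rw [hx_def]; positivity
    have hx38 : x ≤ 3/8 := by
      rw [hx_def, div_le_iff₀ hn0]; linarith
    have hexp := aux_exp x hx0 hx38
    have hfrac_eq : (1-x)/(1+x) = ((n:ℝ)-2*j)/((n:ℝ)+2*j) := by
      rw [hx_def]
      rw [div_eq_div_iff (by positivity) (by linarith)]
      field_simp
    have hfrac_le : ((n:ℝ)-2*j)/((n:ℝ)+2*j) ≤ ρ := by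
      rw [hρ_def, div_le_div_iff₀ (by linarith) hden]
      have key := mul_nonneg hn0.le (by linarith : (0:ℝ) ≤ (n:ℝ) - 2*h)
      linarith [key]
    have hρ_ge : Real.exp (-(6*(j:ℝ)/n)) ≤ ρ := by
      have : -(3*x) = -(6*(j:ℝ)/n) := by rw [hx_def]; ring
      rw [← this]
      exact le_trans hexp (by rw [hfrac_eq]; exact hfrac_le)
    have hρj : Real.exp (-(6*(j:ℝ)^2/n)) ≤ ρ^j := by
      have h1 : Real.exp (-(6*(j:ℝ)/n))^j = Real.exp (-(6*(j:ℝ)^2/n)) := by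
        rw [← Real.exp_nat_mul]
        congr 1
        ring
      rw [← h1]
      exact pow_le_pow_left₀ (Real.exp_pos _).le hρ_ge j
    -- sum lower bounds
    have hsub : Finset.Icc K (K+m) ⊆ Finset.range (n+1) := by
      intro k hk
      rw [Finset.mem_Icc] at hk
      rw [Finset.mem_range]
      omega
    have hsum1 : ∑ k ∈ Finset.Icc K (K+m), (n.choose k : ℝ) * (1/2)^n
        ≤ ∑ k ∈ Finset.range (n + 1),
            if (n : ℝ) / 2 + n * t ≤ k then (n.choose k : ℝ) * (1 / 2) ^ n else 0 := by
      have : ∀ k ∈ Finset.Icc K (K+m), (n.choose k : ℝ) * (1/2)^n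
          = if (n : ℝ) / 2 + n * t ≤ k then (n.choose k : ℝ) * (1 / 2) ^ n else 0 := by
        intro k hk
        rw [Finset.mem_Icc] at hk
        rw [if_pos]
        have : (K:ℝ) ≤ k := by exact_mod_cast hk.1
        linarith
      rw [Finset.sum_congr rfl this]
      exact Finset.sum_le_sum_of_subset_of_nonneg hsub (fun k hk _ => hnonneg k hk)
    have hanti : ∀ k ∈ Finset.Icc K (K+m),
        (n.choose (K+m) : ℝ) * (1/2)^n ≤ (n.choose k : ℝ) * (1/2)^n := by
      intro k hk
      rw [Finset.mem_Icc] at hk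
      have h2k : n ≤ 2*k := by
        have hKn : (n:ℝ) ≤ 2*K := by linarith
        have : n ≤ 2*K := by exact_mod_cast hKn
        omega
      have := aux_anti n k (K+m) h2k hk.2
      have hc : (n.choose (K+m) : ℝ) ≤ (n.choose k : ℝ) := by exact_mod_cast this
      have : (0:ℝ) ≤ ((1:ℝ)/2)^n := by positivity
      exact mul_le_mul_of_nonneg_right hc this
    have hsum2 : ((m:ℝ)+1) * ((n.choose (K+m) : ℝ) * (1/2)^n)
        ≤ ∑ k ∈ Finset.Icc K (K+m), (n.choose k : ℝ) * (1/2)^n := by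
      have hcard : (Finset.Icc K (K+m)).card = m + 1 := by
        rw [Nat.card_Icc]; omega
      have := Finset.card_nsmul_le_sum (Finset.Icc K (K+m))
        (fun k => (n.choose k : ℝ) * (1/2)^n) ((n.choose (K+m) : ℝ) * (1/2)^n) hanti
      rw [hcard] at this
      simpa [nsmul_eq_mul, add_comm] using this
    -- combine
    have hmid := aux_mid n (by omega)
    rw [← hh_def, ← hs_def] at hmid
    have hchoose : (n.choose h : ℝ) * Real.exp (-(6*(j:ℝ)^2/n)) ≤ (n.choose (K+m) : ℝ) := by
      rw [← hj_def]
      calc (n.choose h : ℝ) * Real.exp (-(6*(j:ℝ)^2/n)) ≤ (n.choose h : ℝ) * ρ^j :=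
            mul_le_mul_of_nonneg_left hρj (Nat.cast_nonneg _)
        _ ≤ (n.choose (h+j) : ℝ) := hratio
    have hstep : 1/(4*s) * Real.exp (-(6*(j:ℝ)^2/n)) ≤ (n.choose (K+m) : ℝ) * (1/2)^n := by
      calc 1/(4*s) * Real.exp (-(6*(j:ℝ)^2/n))
          ≤ ((n.choose h : ℝ) * (1/2)^n) * Real.exp (-(6*(j:ℝ)^2/n)) :=
            mul_le_mul_of_nonneg_right hmid (Real.exp_pos _).le
        _ = ((n.choose h : ℝ) * Real.exp (-(6*(j:ℝ)^2/n))) * (1/2)^n := by ring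
        _ ≤ (n.choose (K+m) : ℝ) * (1/2)^n := by
            apply mul_le_mul_of_nonneg_right hchoose (by positivity)
    have hquarter : (1:ℝ)/4 * Real.exp (-(6*(j:ℝ)^2/n))
        ≤ ((m:ℝ)+1) * ((n.choose (K+m) : ℝ) * (1/2)^n) := by
      calc (1:ℝ)/4 * Real.exp (-(6*(j:ℝ)^2/n))
          = s * (1/(4*s) * Real.exp (-(6*(j:ℝ)^2/n))) := by field_simp
        _ ≤ ((m:ℝ)+1) * (1/(4*s) * Real.exp (-(6*(j:ℝ)^2/n))) := by
            apply mul_le_mul_of_nonneg_right hs_lt.le (by positivity)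
        _ ≤ ((m:ℝ)+1) * ((n.choose (K+m) : ℝ) * (1/2)^n) := by
            apply mul_le_mul_of_nonneg_left hstep (by positivity)
    -- exponent bound
    have hexp_bd : 6*(j:ℝ)^2/n ≤ 12*t^2*n + 108 := by
      rw [div_le_iff₀ hn0]
      have h1 : (j:ℝ)^2 ≤ ((n:ℝ)*t + s + 2)^2 :=
        pow_le_pow_left₀ hj0 (by linarith) 2
      have h2 : (s+2)^2 ≤ 9*(n:ℝ) := by
        rw [← hs2]; linarith [h20, hs20]
      have hsq := sq_nonneg ((n:ℝ)*t - (s+2))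
      linarith [h1, h2, hsq]
    have hexp_le : Real.exp (-(12*t^2*n + 108)) ≤ Real.exp (-(6*(j:ℝ)^2/n)) := by
      apply Real.exp_le_exp.mpr; linarith
    have hfour : Real.exp (-400:ℝ) ≤ (1:ℝ)/4 * Real.exp (-(108:ℝ)) := by
      rw [show (-400:ℝ) = -(108:ℝ) + (-292) by norm_num, Real.exp_add]
      rw [mul_comm ((1:ℝ)/4) _]
      apply mul_le_mul_of_nonneg_left _ (Real.exp_pos _).le
      have : (293:ℝ) ≤ Real.exp 292 := by linarith [Real.add_one_le_exp (292:ℝ)]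
      have h292 : Real.exp (-292:ℝ) = (Real.exp 292)⁻¹ := by
        rw [show (-292:ℝ) = -(292:ℝ) by norm_num, Real.exp_neg]
      rw [h292]
      rw [inv_le_comm₀ (Real.exp_pos _) (by norm_num)]
      linarith
    calc Real.exp (-400:ℝ) * Real.exp (-12 * t ^ 2 * n)
        ≤ ((1:ℝ)/4 * Real.exp (-(108:ℝ))) * Real.exp (-12 * t ^ 2 * n) :=
          mul_le_mul_of_nonneg_right hfour (Real.exp_pos _).le
      _ = (1:ℝ)/4 * Real.exp (-(12*t^2*n + 108)) := by
          rw [mul_assoc, ← Real.exp_add]; ring_nf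
      _ ≤ (1:ℝ)/4 * Real.exp (-(6*(j:ℝ)^2/n)) := by
          apply mul_le_mul_of_nonneg_left hexp_le (by norm_num)
      _ ≤ ((m:ℝ)+1) * ((n.choose (K+m) : ℝ) * (1/2)^n) := hquarter
      _ ≤ ∑ k ∈ Finset.Icc K (K+m), (n.choose k : ℝ) * (1/2)^n := hsum2
      _ ≤ _ := hsum1
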